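/- arXiv:1501.06783 — 6 statements merged into one kernel-verified Lean document; each statement's English description precedes it below -/
import Mathlib

section
/- Let D be a probability distribution on [n] and P a monotone non-increasing probability distribution on [n] with d_TV(D,P) ≤ ε. If the flattening of P with respect to a fixed interval partition satisfies d_TV(P, P̄) ≤ α, then d_TV(D, D̄) ≤ 2ε + α, where D̄ is the flattening of D with respect to the same partition. -/
open Finset

noncomputable def tv {n : ℕ} (D P : Fin n → ℝ) : ℝ := (∑ i, |D i - P i|) / 2

def IsDist {n : ℕ} (D : Fin n → ℝ) : Prop := (∀ i, 0 ≤ D i) ∧ ∑ i, D i = 1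

noncomputable def flatten {n ℓ : ℕ} (c : Fin n → Fin ℓ) (D : Fin n → ℝ) : Fin n → ℝ :=
  fun i => (∑ j ∈ univ.filter (fun j => c j = c i), D j) /
    ((univ.filter (fun j => c j = c i)).card : ℝ)

lemma flatten_contract {n ℓ : ℕ} (c : Fin n → Fin ℓ) (D P : Fin n → ℝ) :
    ∑ i, |flatten c D i - flatten c P i| ≤ ∑ i, |D i - P i| := by
  rw [← Finset.sum_fiberwise univ c (fun i => |flatten c D i - flatten c P i|),
      ← Finset.sum_fiberwise univ c (fun i => |D i - P i|)]
  apply Finset.sum_le_sum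
  intro k _
  rcases eq_or_ne (univ.filter fun j => c j = k) ∅ with h | h
  · simp [h]
  · have hcard : ((univ.filter fun j => c j = k).card : ℝ) ≠ 0 := by
      simpa [Finset.card_eq_zero] using h
    calc ∑ i ∈ univ.filter (fun i => c i = k), |flatten c D i - flatten c P i|
        = ∑ _i ∈ univ.filter (fun i => c i = k),
            |(∑ j ∈ univ.filter (fun j => c j = k), (D j - P j)) /
              ((univ.filter fun j => c j = k).card : ℝ)| := by
          apply Finset.sum_congr rfl
          intro i hi
          simp only [Finset.mem_filter] at hi
          simp [flatten, hi.2, Finset.sum_sub_distrib, sub_div]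
      _ = |∑ j ∈ univ.filter (fun j => c j = k), (D j - P j)| := by
          rw [Finset.sum_const, nsmul_eq_mul, abs_div,
            abs_of_nonneg (by positivity : (0:ℝ) ≤ ((univ.filter fun j => c j = k).card : ℝ))]
          field_simp
      _ ≤ ∑ j ∈ univ.filter (fun j => c j = k), |D j - P j| :=
          Finset.abs_sum_le_sum_abs _ _

theorem flatten_robust {n ℓ : ℕ} (c : Fin n → Fin ℓ) (hmono : Monotone c)
    (hsurj : Function.Surjective c) (D P : Fin n → ℝ) (ε α : ℝ)
    (hD : IsDist D) (hP : IsDist P)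
    (hPanti : Antitone P)
    (hclose : tv D P ≤ ε)
    (hPflat : tv P (flatten c P) ≤ α) :
    tv D (flatten c D) ≤ 2 * ε + α := by
  have key : ∑ i, |D i - flatten c D i| ≤
      ∑ i, |D i - P i| + ∑ i, |P i - flatten c P i|
        + ∑ i, |flatten c P i - flatten c D i| := by
    rw [← Finset.sum_add_distrib, ← Finset.sum_add_distrib]
    apply Finset.sum_le_sum
    intro i _
    calc |D i - flatten c D i| = |(D i - P i) + (P i - flatten c P i)
        + (flatten c P i - flatten c D i)| := by ring_nf
      _ ≤ _ := by
        refine (abs_add_le _ _).trans ?_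
        gcongr
        exact abs_add_le _ _
  have hcontr : ∑ i, |flatten c P i - flatten c D i| ≤ ∑ i, |D i - P i| := by
    have := flatten_contract c P D
    simpa [abs_sub_comm] using this
  unfold tv at *
  linarith
end

section
/- If a probability distribution D on [n] is ε-close in total variation distance to some monotone non-increasing distribution, then its flattening D̄ (with respect to any fixed interval partition of [n]) is also ε-close to some monotone non-increasing distribution. -/
open Finset

lemma fiber_sum_flatten {n ℓ : ℕ} (c : Fin n → Fin ℓ) (D : Fin n → ℝ) (k : Fin ℓ) :
    ∑ i ∈ univ.filter (fun i => c i = k), flatten c D i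
      = ∑ i ∈ univ.filter (fun i => c i = k), D i := by
  rcases (univ.filter (fun i : Fin n => c i = k)).eq_empty_or_nonempty with h | h
  · simp [h]
  · have hcard : ((univ.filter (fun i : Fin n => c i = k)).card : ℝ) ≠ 0 := by
      simp [Finset.card_ne_zero_of_mem h.choose_spec]
    have heq : ∀ i ∈ univ.filter (fun i : Fin n => c i = k),
        flatten c D i = (∑ j ∈ univ.filter (fun j => c j = k), D j) /
          ((univ.filter (fun j : Fin n => c j = k)).card : ℝ) := by
      intro i hi
      simp only [mem_filter] at hi
      simp only [flatten, hi.2]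
    rw [Finset.sum_congr rfl heq, Finset.sum_const, nsmul_eq_mul,
      mul_div_cancel₀ _ hcard]

lemma avg_le_avg {α : Type*} (A B : Finset α) (f : α → ℝ) (hA : A.Nonempty) (hB : B.Nonempty)
    (h : ∀ a ∈ A, ∀ b ∈ B, f b ≤ f a) :
    (∑ b ∈ B, f b) / (B.card : ℝ) ≤ (∑ a ∈ A, f a) / (A.card : ℝ) := by
  rw [div_le_div_iff₀ (by exact_mod_cast hB.card_pos) (by exact_mod_cast hA.card_pos)]
  have h1 : (∑ b ∈ B, f b) * (A.card : ℝ) = ∑ a ∈ A, ∑ b ∈ B, f b := by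
    rw [Finset.sum_const, nsmul_eq_mul, mul_comm]
  have h3 : (∑ a ∈ A, ∑ b ∈ B, f a) = (∑ a ∈ A, f a) * (B.card : ℝ) := by
    simp [Finset.sum_const, nsmul_eq_mul, Finset.sum_mul, mul_comm]
  rw [h1, ← h3]
  exact Finset.sum_le_sum fun a ha => Finset.sum_le_sum fun b hb => h a ha b hb

theorem flatten_close_to_monotone {n ℓ : ℕ} (c : Fin n → Fin ℓ) (hmono : Monotone c)
    (hsurj : Function.Surjective c) (D : Fin n → ℝ) (ε : ℝ)
    (hD : IsDist D)
    (hclose : ∃ P : Fin n → ℝ, IsDist P ∧ Antitone P ∧ tv D P ≤ ε) :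
    ∃ P' : Fin n → ℝ, IsDist P' ∧ Antitone P' ∧ tv (flatten c D) P' ≤ ε := by
  obtain ⟨P, ⟨hPnn, hPsum⟩, hanti, htv⟩ := hclose
  have fibne : ∀ i : Fin n, (univ.filter (fun j : Fin n => c j = c i)).Nonempty :=
    fun i => ⟨i, by simp⟩
  refine ⟨flatten c P, ⟨?_, ?_⟩, ?_, ?_⟩
  · intro i
    exact div_nonneg (Finset.sum_nonneg fun j _ => hPnn j) (Nat.cast_nonneg _)
  · rw [← Finset.sum_fiberwise univ c (flatten c P)]
    rw [Finset.sum_congr rfl (fun k _ => fiber_sum_flatten c P k)]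
    rw [Finset.sum_fiberwise univ c P]
    exact hPsum
  · -- Antitone
    intro i i' hii
    show flatten c P i' ≤ flatten c P i
    rcases eq_or_lt_of_le (hmono hii) with hc | hc
    · simp only [flatten, hc]; exact le_refl _
    · apply avg_le_avg _ _ _ (fibne i) (fibne i')
      intro a ha b hb
      simp only [mem_filter] at ha hb
      apply hanti
      by_contra hab
      push_neg at hab
      have := hmono hab.le
      rw [hb.2, ha.2] at this
      exact absurd this (not_le_of_gt hc)
  · -- tv bound
    refine le_trans ?_ htv
    unfold tv
    apply div_le_div_of_nonneg_right ?_ (by norm_num)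
    rw [← Finset.sum_fiberwise univ c (fun i => |flatten c D i - flatten c P i|),
      ← Finset.sum_fiberwise univ c (fun i => |D i - P i|)]
    apply Finset.sum_le_sum
    intro k _
    rcases (univ.filter (fun i : Fin n => c i = k)).eq_empty_or_nonempty with h | h
    · simp [h]
    · have hcardpos : (0 : ℝ) < ((univ.filter (fun i : Fin n => c i = k)).card : ℝ) := by
        exact_mod_cast h.card_pos
      have heq : ∀ i ∈ univ.filter (fun i : Fin n => c i = k),
          |flatten c D i - flatten c P i|
            = |∑ j ∈ univ.filter (fun j => c j = k), (D j - P j)| /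
              ((univ.filter (fun j : Fin n => c j = k)).card : ℝ) := by
        intro i hi
        simp only [mem_filter] at hi
        simp only [flatten, hi.2, ← sub_div, ← Finset.sum_sub_distrib,
          abs_div, abs_of_pos hcardpos]
      rw [Finset.sum_congr rfl heq, Finset.sum_const, nsmul_eq_mul,
        mul_div_cancel₀ _ (ne_of_gt hcardpos)]
      exact Finset.abs_sum_le_sum_abs _ _
end

section
/- Let D̄ be a distribution on [n] which is piecewise constant on each interval of a fixed partition I_1,...,I_ℓ of [n] into intervals (i.e., D̄ is I-flat). If D̄ is ε-close in total variation distance to some monotone non-increasing distribution, then D̄ is ε-close to a monotone non-increasing distribution that is itself piecewise constant on the same partition. -/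
open Finset

/-- `D` is piecewise constant on the fibers of `c` (the interval partition). -/
def IsFlat {n ℓ : ℕ} (c : Fin n → Fin ℓ) (D : Fin n → ℝ) : Prop :=
  ∀ i j : Fin n, c i = c j → D i = D j

theorem flat_close_monotone_iff_close_flat_monotone {n ℓ : ℕ} (c : Fin n → Fin ℓ)
    (hmono : Monotone c) (hsurj : Function.Surjective c)
    (Dbar : Fin n → ℝ) (ε : ℝ)
    (hD : IsDist Dbar) (hflat : IsFlat c Dbar)
    (hclose : ∃ P : Fin n → ℝ, IsDist P ∧ Antitone P ∧ tv Dbar P ≤ ε) :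
    ∃ P : Fin n → ℝ, IsDist P ∧ Antitone P ∧ IsFlat c P ∧ tv Dbar P ≤ ε := by
  classical
  obtain ⟨P, hPd, hPa, hPtv⟩ := hclose
  set F : Fin ℓ → Finset (Fin n) := fun k => univ.filter (fun j => c j = k) with hF
  have hmemF : ∀ {j : Fin n} {k : Fin ℓ}, j ∈ F k → c j = k := by
    intro j k hj; simpa [hF] using hj
  have hne : ∀ k, (F k).Nonempty := fun k => by
    obtain ⟨i, hi⟩ := hsurj k; exact ⟨i, by simp [hF, hi]⟩
  have hcardpos : ∀ k, (0:ℝ) < (F k).card := fun k => by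
    exact_mod_cast Finset.card_pos.mpr (hne k)
  set Q : Fin n → ℝ := fun i => (∑ j ∈ F (c i), P j) / (F (c i)).card with hQ
  have hQk : ∀ i, Q i = (∑ j ∈ F (c i), P j) / (F (c i)).card := fun i => rfl
  have hflatQ : IsFlat c Q := fun i j h => by simp only [hQ, h]
  have hQ0 : ∀ i, 0 ≤ Q i := fun i =>
    div_nonneg (Finset.sum_nonneg fun j _ => hPd.1 j) (le_of_lt (hcardpos _))
  have hsumF : ∀ k, ∑ i ∈ F k, Q i = ∑ j ∈ F k, P j := by
    intro k
    have h1 : ∀ i ∈ F k, Q i = (∑ j ∈ F k, P j) / (F k).card := by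
      intro i hi
      rw [hQk, hmemF hi]
    rw [Finset.sum_congr rfl h1, Finset.sum_const, nsmul_eq_mul]
    field_simp
  have hsum1 : ∑ i, Q i = 1 := by
    calc ∑ i, Q i = ∑ k, ∑ i ∈ F k, Q i := (Finset.sum_fiberwise univ c Q).symm
      _ = ∑ k, ∑ j ∈ F k, P j := Finset.sum_congr rfl fun k _ => hsumF k
      _ = ∑ j, P j := Finset.sum_fiberwise univ c P
      _ = 1 := hPd.2
  have hAnti : Antitone Q := by
    intro i j hij
    rcases eq_or_lt_of_le (hmono hij) with h | h
    · exact le_of_eq (hflatQ j i h.symm)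
    · have key : ∀ a ∈ F (c i), Q j ≤ P a := by
        intro a ha
        rw [hQk, div_le_iff₀ (hcardpos _)]
        calc ∑ b ∈ F (c j), P b ≤ ∑ _b ∈ F (c j), P a := by
              apply Finset.sum_le_sum
              intro b hb
              apply hPa
              by_contra hba
              push_neg at hba
              have := hmono hba.le
              rw [hmemF hb, hmemF ha] at this
              exact absurd this (not_le.mpr h)
          _ = P a * (F (c j)).card := by
              rw [Finset.sum_const, nsmul_eq_mul]; ring
      rw [hQk i, le_div_iff₀ (hcardpos _)]
      calc Q j * (F (c i)).card = ∑ _a ∈ F (c i), Q j := by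
            rw [Finset.sum_const, nsmul_eq_mul]; ring
        _ ≤ ∑ a ∈ F (c i), P a := Finset.sum_le_sum key
  have htvsum : ∑ i, |Dbar i - Q i| ≤ ∑ i, |Dbar i - P i| := by
    rw [← Finset.sum_fiberwise univ c (fun i => |Dbar i - Q i|),
        ← Finset.sum_fiberwise univ c (fun i => |Dbar i - P i|)]
    apply Finset.sum_le_sum
    intro k _
    have hm := hcardpos k
    have step : ∀ i ∈ F k, |Dbar i - Q i| ≤ (∑ j ∈ F k, |Dbar j - P j|) / (F k).card := by
      intro i hi
      have hci : c i = k := hmemF hi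
      have hrew : Dbar i - Q i = (∑ j ∈ F k, (Dbar j - P j)) / (F k).card := by
        rw [hQk, hci, Finset.sum_sub_distrib]
        have hsumD : ∑ j ∈ F k, Dbar j = (F k).card * Dbar i := by
          rw [Finset.sum_congr rfl (fun j hj => hflat j i (by rw [hmemF hj, hci])),
            Finset.sum_const, nsmul_eq_mul]
        rw [hsumD]
        field_simp
      rw [hrew, abs_div, abs_of_pos hm]
      gcongr
      exact Finset.abs_sum_le_sum_abs _ _
    calc ∑ i ∈ F k, |Dbar i - Q i|
        ≤ ∑ _i ∈ F k, (∑ j ∈ F k, |Dbar j - P j|) / (F k).card :=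
          Finset.sum_le_sum step
      _ = (F k).card * ((∑ j ∈ F k, |Dbar j - P j|) / (F k).card) := by
          rw [Finset.sum_const, nsmul_eq_mul]
      _ = ∑ j ∈ F k, |Dbar j - P j| := by field_simp
  refine ⟨Q, ⟨hQ0, hsum1⟩, hAnti, hflatQ, ?_⟩
  calc tv Dbar Q ≤ tv Dbar P := by unfold tv; gcongr
    _ ≤ ε := hPtv
end

section
/- Fix α ∈ (0,1) and a probability distribution Q on [ℓ]. Let W = {i ∈ {2,...,ℓ} : Q(i) > (1+α)Q(i-1)} be the set of witnesses violating the exponential-growth property. Then there exists a distribution Q' on [ℓ] satisfying Q'(i+1) ≤ (1+α)Q'(i) for all i < ℓ, such that d_TV(Q, Q') ≤ ((1+α)/α) · Q(W). -/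
open Finset

/-- The exponential property `P_α`: `Q (k+1) ≤ (1+α) * Q k` for all `k < ℓ`. -/
def ExpProp {ℓ : ℕ} (α : ℝ) (Q : Fin ℓ → ℝ) : Prop :=
  ∀ i : Fin ℓ, ∀ h : i.1 + 1 < ℓ, Q ⟨i.1 + 1, h⟩ ≤ (1 + α) * Q i

/-- Predecessor of a nonzero index in `Fin ℓ`. -/
def pred' {ℓ : ℕ} (i : Fin ℓ) : Fin ℓ :=
  ⟨i.1 - 1, Nat.lt_of_le_of_lt (Nat.sub_le _ _) i.2⟩

namespace DistAux

open scoped Classical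

noncomputable def build (α : ℝ) (ℓ : ℕ) (Qn : ℕ → ℝ) (k : ℕ) : ℝ :=
  if k + 1 < ℓ then max (Qn k) (build α ℓ Qn (k+1) / (1+α)) else Qn k
termination_by ℓ - k
decreasing_by omega

noncomputable def wQ (α : ℝ) (Qn : ℕ → ℝ) (k : ℕ) : ℝ :=
  if 1 ≤ k ∧ (1+α) * Qn (k-1) < Qn k then Qn k else 0

variable {α : ℝ} {ℓ : ℕ} {Qn : ℕ → ℝ}

lemma build_eq_of_lt (h : k + 1 < ℓ) :
    build α ℓ Qn k = max (Qn k) (build α ℓ Qn (k+1) / (1+α)) := by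
  rw [build]; simp [h]

lemma build_eq_of_ge (h : ¬ (k + 1 < ℓ)) : build α ℓ Qn k = Qn k := by
  rw [build]; simp [h]

lemma le_build (k : ℕ) : Qn k ≤ build α ℓ Qn k := by
  by_cases h : k + 1 < ℓ
  · rw [build_eq_of_lt h]; exact le_max_left _ _
  · rw [build_eq_of_ge h]

lemma wQ_nonneg (hQn : ∀ k, 0 ≤ Qn k) (k : ℕ) : 0 ≤ wQ α Qn k := by
  unfold wQ; split
  · exact hQn k
  · exact le_rfl

lemma build_succ_le (hα : 0 < α) (h : k + 1 < ℓ) :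
    build α ℓ Qn (k+1) ≤ (1 + α) * build α ℓ Qn k := by
  have h1 : (0:ℝ) < 1 + α := by linarith
  have := le_max_right (Qn k) (build α ℓ Qn (k+1) / (1+α))
  rw [← build_eq_of_lt h] at this
  calc build α ℓ Qn (k+1) = (1+α) * (build α ℓ Qn (k+1) / (1+α)) := by
        field_simp
    _ ≤ (1+α) * build α ℓ Qn k := by
        exact mul_le_mul_of_nonneg_left this (le_of_lt h1)

lemma step (hα : 0 < α) (hQn : ∀ k, 0 ≤ Qn k) (h : k + 1 < ℓ) :
    build α ℓ Qn k - Qn k ≤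
      ((build α ℓ Qn (k+1) - Qn (k+1)) + wQ α Qn (k+1)) / (1+α) := by
  have h1 : (0:ℝ) < 1 + α := by linarith
  have he1 : 0 ≤ build α ℓ Qn (k+1) - Qn (k+1) := by linarith [le_build (α := α) (ℓ := ℓ) (Qn := Qn) (k+1)]
  rw [build_eq_of_lt h]
  rcases max_cases (Qn k) (build α ℓ Qn (k+1) / (1+α)) with ⟨heq, _⟩ | ⟨heq, _⟩
  · rw [heq, sub_self]
    exact div_nonneg (add_nonneg he1 (wQ_nonneg hQn (k+1))) h1.le
  · rw [heq]
    by_cases hw : (1+α) * Qn k < Qn (k+1)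
    · have hwq : wQ α Qn (k+1) = Qn (k+1) := by
        unfold wQ; rw [if_pos ⟨Nat.le_add_left 1 k, by simpa using hw⟩]
      rw [hwq]
      have hrhs : (build α ℓ Qn (k+1) - Qn (k+1) + Qn (k+1)) / (1+α)
          = build α ℓ Qn (k+1) / (1+α) := by ring_nf
      rw [hrhs]
      linarith [hQn k]
    · have hwz : wQ α Qn (k+1) = 0 := by
        unfold wQ
        rw [if_neg]
        rintro ⟨-, hlt⟩
        simp at hlt
        exact hw hlt
      rw [hwz]
      have hle : Qn (k+1) ≤ (1+α) * Qn k := le_of_not_gt hw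
      rw [div_sub' (ne_of_gt h1), div_le_div_iff₀ h1 h1]
      nlinarith

lemma invariant (hα : 0 < α) (hQn : ∀ k, 0 ≤ Qn k) :
    ∀ n j, ℓ ≤ j + n →
      (build α ℓ Qn j - Qn j) / α + ∑ k ∈ Ico j ℓ, (build α ℓ Qn k - Qn k) ≤
        (∑ k ∈ Ico (j+1) ℓ, wQ α Qn k) / α := by
  intro n
  induction n with
  | zero =>
    intro j hj
    simp at hj
    rw [Ico_eq_empty (by omega), build_eq_of_ge (by omega)]
    have : 0 ≤ (∑ k ∈ Ico (j+1) ℓ, wQ α Qn k) / α := by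
      apply div_nonneg _ (le_of_lt hα)
      exact Finset.sum_nonneg fun k _ => wQ_nonneg hQn k
    simpa using this
  | succ n ih =>
    intro j hj
    by_cases hjl : j < ℓ
    · by_cases hj1 : j + 1 < ℓ
      · have hIH := ih (j+1) (by omega)
        have hstep := step (k := j) hα hQn hj1
        have h1 : (0:ℝ) < 1 + α := by linarith
        have hsum1 : ∑ k ∈ Ico j ℓ, (build α ℓ Qn k - Qn k)
            = (build α ℓ Qn j - Qn j) + ∑ k ∈ Ico (j+1) ℓ, (build α ℓ Qn k - Qn k) :=
          Finset.sum_eq_sum_Ico_succ_bot hjl _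
        have hsum2 : ∑ k ∈ Ico (j+1) ℓ, wQ α Qn k
            = wQ α Qn (j+1) + ∑ k ∈ Ico (j+1+1) ℓ, wQ α Qn k :=
          Finset.sum_eq_sum_Ico_succ_bot hj1 _
        have hstep' : (build α ℓ Qn j - Qn j) * (1+α) ≤
            (build α ℓ Qn (j+1) - Qn (j+1)) + wQ α Qn (j+1) := by
          rw [← le_div_iff₀ h1]; exact hstep
        have hm : (build α ℓ Qn j - Qn j) * (1+α) / α ≤
            ((build α ℓ Qn (j+1) - Qn (j+1)) + wQ α Qn (j+1)) / α :=
          (div_le_div_iff_of_pos_right hα).mpr hstep'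
        have hd1 : (build α ℓ Qn j - Qn j) * (1+α) / α
            = (build α ℓ Qn j - Qn j) / α + (build α ℓ Qn j - Qn j) := by
          field_simp
        have hd2 : ((build α ℓ Qn (j+1) - Qn (j+1)) + wQ α Qn (j+1)) / α
            = (build α ℓ Qn (j+1) - Qn (j+1)) / α + wQ α Qn (j+1) / α := add_div _ _ _
        have hd3 : (wQ α Qn (j+1) + ∑ k ∈ Ico (j+1+1) ℓ, wQ α Qn k) / α
            = wQ α Qn (j+1) / α + (∑ k ∈ Ico (j+1+1) ℓ, wQ α Qn k) / α := add_div _ _ _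
        rw [hsum1, hsum2, hd3]
        rw [hd1, hd2] at hm
        linarith
      · -- j = ℓ - 1
        have hej : build α ℓ Qn j - Qn j = 0 := by rw [build_eq_of_ge hj1]; ring
        have hℓ : ℓ = j + 1 := by omega
        subst hℓ
        rw [show Ico (j+1) (j+1) = ∅ from Finset.Ico_self _, Nat.Ico_succ_singleton]
        simp [hej]
    · have := ih j (by omega)
      exact this

end DistAux

theorem dist_expProp_le_weight_witnesses {ℓ : ℕ} (α : ℝ) (hα : 0 < α) (hα1 : α < 1)
    (Q : Fin ℓ → ℝ) (hQ : IsDist Q)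
    (W : Finset (Fin ℓ))
    (hW : W = univ.filter (fun i : Fin ℓ => 0 < i.1 ∧ Q i > (1 + α) * Q (pred' i))) :
    ∃ Q' : Fin ℓ → ℝ, IsDist Q' ∧ ExpProp α Q' ∧
      tv Q Q' ≤ ((1 + α) / α) * ∑ i ∈ W, Q i := by
  classical
  rcases Nat.eq_zero_or_pos ℓ with hℓ0 | hℓpos
  · subst hℓ0
    exact absurd hQ.2 (by simp)
  have h1 : (0:ℝ) < 1 + α := by linarith
  set Qn : ℕ → ℝ := fun k => if h : k < ℓ then Q ⟨k, h⟩ else 0 with hQn_def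
  have hQn0 : ∀ k, 0 ≤ Qn k := by
    intro k; simp only [hQn_def]
    split
    · exact hQ.1 _
    · exact le_rfl
  set B : ℕ → ℝ := DistAux.build α ℓ Qn with hB
  have hQeq : ∀ i : Fin ℓ, Qn i.1 = Q i := by
    intro i; simp [hQn_def, i.2]
  have hle : ∀ i : Fin ℓ, Q i ≤ B i.1 := fun i => (hQeq i) ▸ DistAux.le_build i.1
  have hBnn : ∀ k, 0 ≤ B k := fun k => le_trans (hQn0 k) (DistAux.le_build k)
  set S := ∑ i : Fin ℓ, B i.1 with hS
  have hS1 : (1:ℝ) ≤ S := by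
    rw [hS, ← hQ.2]
    exact Finset.sum_le_sum fun i _ => hle i
  have hSpos : (0:ℝ) < S := lt_of_lt_of_le one_pos hS1
  -- witness weight identity
  have hWsum : ∑ i ∈ W, Q i = ∑ k ∈ Finset.range ℓ, DistAux.wQ α Qn k := by
    rw [hW, Finset.sum_filter, ← Fin.sum_univ_eq_sum_range (fun k => DistAux.wQ α Qn k) ℓ]
    apply Finset.sum_congr rfl
    intro i _
    have hpred : Qn (i.1 - 1) = Q (pred' i) := by
      have : i.1 - 1 < ℓ := Nat.lt_of_le_of_lt (Nat.sub_le _ _) i.2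
      simp only [hQn_def, dif_pos this]
      rfl
    unfold DistAux.wQ
    rw [hQeq i, hpred]
    by_cases hc : 0 < i.1 ∧ Q i > (1 + α) * Q (pred' i)
    · rw [if_pos hc, if_pos ⟨hc.1, hc.2⟩]
    · rw [if_neg hc, if_neg (by tauto)]
  have hWnn : 0 ≤ ∑ i ∈ W, Q i := by
    rw [hW]
    exact Finset.sum_nonneg fun i _ => hQ.1 i
  -- excess bound
  have hinv := DistAux.invariant (α := α) (ℓ := ℓ) (Qn := Qn) hα hQn0 ℓ 0 (by omega)
  have he0 : 0 ≤ (B 0 - Qn 0) / α :=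
    div_nonneg (by linarith [DistAux.le_build (α := α) (ℓ := ℓ) (Qn := Qn) 0]) hα.le
  have hEsum : ∑ k ∈ Finset.Ico 0 ℓ, (B k - Qn k) = S - 1 := by
    rw [← Finset.range_eq_Ico, ← Fin.sum_univ_eq_sum_range (fun k => B k - Qn k) ℓ]
    have : ∀ i : Fin ℓ, B i.1 - Qn i.1 = B i.1 - Q i := by
      intro i; rw [hQeq i]
    rw [Finset.sum_congr rfl (fun i _ => this i), Finset.sum_sub_distrib, hQ.2, hS]
  have hwmono : ∑ k ∈ Finset.Ico (0+1) ℓ, DistAux.wQ α Qn k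
      ≤ ∑ k ∈ Finset.range ℓ, DistAux.wQ α Qn k := by
    rw [Finset.range_eq_Ico]
    apply Finset.sum_le_sum_of_subset_of_nonneg
    · exact Finset.Ico_subset_Ico (by omega) le_rfl
    · intro k _ _; exact DistAux.wQ_nonneg hQn0 k
  have hE : S - 1 ≤ ((1 + α) / α) * ∑ i ∈ W, Q i := by
    rw [hWsum]
    have h2 : S - 1 ≤ (∑ k ∈ Finset.range ℓ, DistAux.wQ α Qn k) / α := by
      have h2a : S - 1 ≤ (∑ k ∈ Finset.Ico (0+1) ℓ, DistAux.wQ α Qn k) / α := by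
        linarith [hinv, hEsum]
      exact h2a.trans ((div_le_div_iff_of_pos_right hα).mpr hwmono)
    have h3 : (∑ k ∈ Finset.range ℓ, DistAux.wQ α Qn k) / α
        ≤ ((1 + α) / α) * ∑ k ∈ Finset.range ℓ, DistAux.wQ α Qn k := by
      have hw0 : 0 ≤ ∑ k ∈ Finset.range ℓ, DistAux.wQ α Qn k :=
        Finset.sum_nonneg fun k _ => DistAux.wQ_nonneg hQn0 k
      have hle' : (∑ k ∈ Finset.range ℓ, DistAux.wQ α Qn k)
          ≤ (1 + α) * ∑ k ∈ Finset.range ℓ, DistAux.wQ α Qn k := by nlinarith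
      calc (∑ k ∈ Finset.range ℓ, DistAux.wQ α Qn k) / α
          ≤ ((1 + α) * ∑ k ∈ Finset.range ℓ, DistAux.wQ α Qn k) / α :=
            (div_le_div_iff_of_pos_right hα).mpr hle'
        _ = ((1 + α) / α) * ∑ k ∈ Finset.range ℓ, DistAux.wQ α Qn k := by ring
    linarith
  -- the candidate distribution
  refine ⟨fun i => B i.1 / S, ⟨fun i => div_nonneg (hBnn i.1) hSpos.le, ?_⟩, ?_, ?_⟩
  · rw [← Finset.sum_div, ← hS, div_self (ne_of_gt hSpos)]
  · intro i h
    have := DistAux.build_succ_le (α := α) (ℓ := ℓ) (Qn := Qn) (k := i.1) hα h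
    calc B (i.1 + 1) / S ≤ ((1 + α) * B i.1) / S :=
          (div_le_div_iff_of_pos_right hSpos).mpr this
      _ = (1 + α) * (B i.1 / S) := by ring
  · -- tv bound
    have hsumdiv : ∑ i : Fin ℓ, B i.1 / S = 1 := by
      rw [← Finset.sum_div, ← hS, div_self (ne_of_gt hSpos)]
    have hpt : ∀ i : Fin ℓ, |Q i - B i.1 / S| ≤ (B i.1 - Q i) + (B i.1 - B i.1 / S) := by
      intro i
      have h1' := hle i
      have h2' : B i.1 / S ≤ B i.1 := div_le_self (hBnn i.1) hS1
      rw [abs_le]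
      constructor <;> [linarith; linarith]
    have htv : tv Q (fun i => B i.1 / S) ≤ S - 1 := by
      unfold tv
      have hsum : ∑ i : Fin ℓ, |Q i - B i.1 / S|
          ≤ ∑ i : Fin ℓ, ((B i.1 - Q i) + (B i.1 - B i.1 / S)) :=
        Finset.sum_le_sum fun i _ => hpt i
      have : ∑ i : Fin ℓ, ((B i.1 - Q i) + (B i.1 - B i.1 / S)) = 2 * (S - 1) := by
        rw [Finset.sum_add_distrib, Finset.sum_sub_distrib, Finset.sum_sub_distrib,
          hQ.2, hsumdiv, ← hS]
        ring
      rw [this] at hsum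
      linarith
    linarith
end

section
/- Let D be a probability distribution on [n] with n even, and define the mirrored distribution D⁻ by D⁻(i) = D(n+1−i). If both D and D⁻ are ε/3-close in total variation distance to some monotone non-increasing distribution, then D is ε-close to the uniform distribution on [n]. -/
open Finset

lemma tv_nonneg' {n : ℕ} (D P : Fin n → ℝ) : 0 ≤ tv D P := by
  unfold tv; positivity

lemma tv_comm' {n : ℕ} (D P : Fin n → ℝ) : tv D P = tv P D := by
  unfold tv; simp [abs_sub_comm]

lemma tv_triangle' {n : ℕ} (f g h : Fin n → ℝ) : tv f h ≤ tv f g + tv g h := by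
  unfold tv
  have hsum : ∑ i, |f i - h i| ≤ ∑ i, (|f i - g i| + |g i - h i|) :=
    Finset.sum_le_sum fun i _ => abs_sub_le _ _ _
  rw [Finset.sum_add_distrib] at hsum
  linarith

lemma sum_max_eq' {n : ℕ} (f : Fin n → ℝ) (hf : ∑ i, f i = 0) :
    ∑ i, max (f i) 0 = (∑ i, |f i|) / 2 := by
  have h : ∀ x : ℝ, max x 0 = (|x| + x) / 2 := by
    intro x
    rcases le_total x 0 with hx | hx
    · rw [max_eq_right hx, abs_of_nonpos hx]; ring
    · rw [max_eq_left hx, abs_of_nonneg hx]; ring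
  calc ∑ i, max (f i) 0 = ∑ i, (|f i| + f i) / 2 := by simp_rw [h]
    _ = ((∑ i, |f i|) + ∑ i, f i) / 2 := by
        rw [← Finset.sum_div, Finset.sum_add_distrib]
    _ = (∑ i, |f i|) / 2 := by rw [hf, add_zero]

lemma setsum_le_tv' {n : ℕ} (f g : Fin n → ℝ) (hfg : ∑ i, f i = ∑ i, g i)
    (S : Finset (Fin n)) : ∑ i ∈ S, (f i - g i) ≤ tv f g := by
  have h1 : ∑ i ∈ S, (f i - g i) ≤ ∑ i ∈ S, max (f i - g i) 0 :=
    Finset.sum_le_sum fun i _ => le_max_left _ _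
  have h2 : ∑ i ∈ S, max (f i - g i) 0 ≤ ∑ i, max (f i - g i) 0 :=
    Finset.sum_le_sum_of_subset_of_nonneg (Finset.subset_univ S)
      (fun i _ _ => le_max_right _ _)
  have h3 : ∑ i, (f i - g i) = 0 := by rw [Finset.sum_sub_distrib, hfg, sub_self]
  have h4 := sum_max_eq' (fun i => f i - g i) h3
  unfold tv
  calc ∑ i ∈ S, (f i - g i) ≤ ∑ i, max (f i - g i) 0 := le_trans h1 h2
    _ = (∑ i, |f i - g i|) / 2 := h4

lemma downset_sum_le' {n : ℕ} (hn : (0:ℝ) < n) (B : Fin n → ℝ) (hm : Monotone B)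
    (_h0 : ∀ i, 0 ≤ B i) (h1 : ∑ i, B i = 1) (S : Finset (Fin n))
    (hS : ∀ ⦃i j : Fin n⦄, i ∈ S → j ≤ i → j ∈ S) :
    ∑ i ∈ S, B i ≤ (S.card : ℝ) / n := by
  have hcompl : ∑ j ∈ Finset.univ \ S, B j = 1 - ∑ i ∈ S, B i := by
    rw [Finset.sum_sdiff_eq_sub (Finset.subset_univ S), h1]
  have hcard : ((Finset.univ \ S).card : ℝ) = (n : ℝ) - S.card := by
    rw [Finset.card_sdiff_of_subset (Finset.subset_univ S), Finset.card_univ, Fintype.card_fin,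
      Nat.cast_sub (by simpa using Finset.card_le_card (Finset.subset_univ S))]
  have key : ((Finset.univ \ S).card : ℝ) * ∑ i ∈ S, B i
      ≤ (S.card : ℝ) * ∑ j ∈ Finset.univ \ S, B j := by
    calc ((Finset.univ \ S).card : ℝ) * ∑ i ∈ S, B i
        = ∑ _j ∈ Finset.univ \ S, ∑ i ∈ S, B i := by
          rw [Finset.sum_const, nsmul_eq_mul]
      _ ≤ ∑ j ∈ Finset.univ \ S, ∑ _i ∈ S, B j := by
          apply Finset.sum_le_sum
          intro j hj
          apply Finset.sum_le_sum
          intro i hi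
          apply hm
          by_contra hij
          exact (Finset.mem_sdiff.mp hj).2 (hS hi (le_of_not_ge hij))
      _ = ∑ j ∈ Finset.univ \ S, (S.card : ℝ) * B j := by
          simp [Finset.sum_const, nsmul_eq_mul]
      _ = (S.card : ℝ) * ∑ j ∈ Finset.univ \ S, B j := by rw [Finset.mul_sum]
  rw [hcompl, hcard] at key
  rw [le_div_iff₀ hn]
  nlinarith [Finset.sum_le_sum (fun i (_ : i ∈ S) => le_refl (B i))]

theorem mirror_close_monotone_implies_close_uniform {n : ℕ} (hn : Even n)
    (D : Fin n → ℝ) (hD : IsDist D) (ε : ℝ)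
    (h1 : ∃ P : Fin n → ℝ, IsDist P ∧ Antitone P ∧ tv D P ≤ ε / 3)
    (h2 : ∃ P : Fin n → ℝ, IsDist P ∧ Antitone P ∧ tv (fun i => D i.rev) P ≤ ε / 3) :
    tv D (fun _ => 1 / (n : ℝ)) ≤ ε := by
  obtain ⟨P, hPd, hPa, hPtv⟩ := h1
  obtain ⟨Q, hQd, hQa, hQtv⟩ := h2
  have hn0 : n ≠ 0 := by
    rintro rfl
    have := hD.2
    simp at this
  have hnR : (0:ℝ) < n := by
    exact_mod_cast Nat.pos_of_ne_zero hn0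
  -- B is the mirrored Q, a monotone nondecreasing distribution close to D
  set B : Fin n → ℝ := fun i => Q i.rev with hB
  have hBmono : Monotone B := fun i j hij => hQa (Fin.rev_le_rev.mpr hij)
  have hrevsum : ∀ f : Fin n → ℝ, ∑ i : Fin n, f i.rev = ∑ i : Fin n, f i := by
    intro f
    exact Fintype.sum_bijective Fin.rev (Fin.rev_involutive.bijective) _ _ (fun x => rfl)
  have hBsum : ∑ i, B i = 1 := by
    rw [hB]
    rw [hrevsum Q]
    exact hQd.2
  have hDB : tv D B ≤ ε / 3 := by
    have heq : tv D B = tv (fun i => D i.rev) Q := by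
      unfold tv
      congr 1
      have := hrevsum (fun i => |D i.rev - Q i|)
      simp only [Fin.rev_rev] at this
      rw [hB]
      simp only []
      linarith [this]
    rw [heq]; exact hQtv
  have hε : 0 ≤ ε := by
    have := tv_nonneg' D P
    linarith
  -- the set where P exceeds uniform
  set S : Finset (Fin n) := Finset.univ.filter (fun i => 1 / (n:ℝ) < P i) with hSdef
  have hSdown : ∀ ⦃i j : Fin n⦄, i ∈ S → j ≤ i → j ∈ S := by
    intro i j hi hji
    rw [hSdef, Finset.mem_filter] at hi ⊢
    exact ⟨Finset.mem_univ _, lt_of_lt_of_le hi.2 (hPa hji)⟩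
  have hUsum : ∑ _i : Fin n, (1 / (n:ℝ)) = 1 := by
    rw [Finset.sum_const, Finset.card_univ, Fintype.card_fin, nsmul_eq_mul]
    field_simp
  -- tv P U = ∑_{i ∈ S} (P i - 1/n)
  have hPU : tv P (fun _ => 1 / (n:ℝ)) = ∑ i ∈ S, (P i - 1 / (n:ℝ)) := by
    unfold tv
    have hzero : ∑ i, (P i - 1 / (n:ℝ)) = 0 := by
      rw [Finset.sum_sub_distrib, hPd.2, hUsum, sub_self]
    rw [← sum_max_eq' _ hzero]
    rw [hSdef, Finset.sum_filter]
    apply Finset.sum_congr rfl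
    intro i _
    rcases lt_or_ge (1 / (n:ℝ)) (P i) with h | h
    · rw [if_pos h, max_eq_left (by linarith)]
    · rw [if_neg (not_lt.mpr h), max_eq_right (by linarith)]
  have hPB : ∑ i ∈ S, (P i - B i) ≤ tv P B :=
    setsum_le_tv' P B (by rw [hPd.2, hBsum]) S
  have hBS : ∑ i ∈ S, B i ≤ (S.card : ℝ) / n :=
    downset_sum_le' hnR B hBmono (fun i => hQd.1 i.rev) hBsum S hSdown
  have hScard : ∑ _i ∈ S, (1 / (n:ℝ)) = (S.card : ℝ) / n := by
    rw [Finset.sum_const, nsmul_eq_mul]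
    ring
  have hPBtri : tv P B ≤ 2 * (ε / 3) := by
    have h := tv_triangle' P D B
    rw [tv_comm' P D] at h
    linarith
  have hPUle : tv P (fun _ => 1 / (n:ℝ)) ≤ 2 * (ε / 3) := by
    rw [hPU]
    have hsplit : ∑ i ∈ S, (P i - 1 / (n:ℝ))
        = (∑ i ∈ S, (P i - B i)) + ((∑ i ∈ S, B i) - (S.card : ℝ) / n) := by
      rw [Finset.sum_sub_distrib, Finset.sum_sub_distrib, hScard]
      ring
    rw [hsplit]
    have : (∑ i ∈ S, B i) - (S.card : ℝ) / n ≤ 0 := by linarith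
    linarith
  have htri := tv_triangle' D P (fun _ => 1 / (n:ℝ))
  linarith
end

section
/- Let D₁ be the uniform distribution on {1,...,(2+κε)m} for parameters ε ∈ (0,1/2), κ = 4/(1−2ε), and positive integer m (assume (2+κε)m, (1+κε)m, and (1+κε/2)m are integers). Let D₂ be the distribution putting total weight 1/2−ε uniformly on {1,...,m}, weight 0 on {m+1,...,(1+κε/2)m}, weight 2ε uniformly on {(1+κε/2)m+1,...,(1+κε)m}, and weight 1/2−ε uniformly on {(1+κε)m+1,...,(2+κε)m}. Then D₁ is monotone non-increasing, and the total variation distance from D₂ to every monotone non-increasing distribution is at least ε. -/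
open Finset

theorem eval_lb_construction {n m p q r : ℕ} (ε κ : ℝ)
    (hε0 : 0 < ε) (hε : ε < 1 / 2) (hκ : κ = 4 / (1 - 2 * ε))
    (hm : 0 < m)
    (hp : (p : ℝ) = (1 + κ * ε / 2) * m)
    (hq : (q : ℝ) = (1 + κ * ε) * m)
    (hr : (r : ℝ) = (2 + κ * ε) * m)
    (hn : r ≤ n)
    (D₁ D₂ : Fin n → ℝ)
    (hD₁ : ∀ i : Fin n, D₁ i = if i.1 < r then 1 / (r : ℝ) else 0)
    (hD₂ : ∀ i : Fin n, D₂ i =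
      if i.1 < m then (1 / 2 - ε) / m
      else if i.1 < p then 0
      else if i.1 < q then 2 * ε / ((q : ℝ) - p)
      else if i.1 < r then (1 / 2 - ε) / ((r : ℝ) - q)
      else 0) :
    Antitone D₁ ∧ ∀ P : Fin n → ℝ, IsDist P → Antitone P → ε ≤ tv D₂ P := by
  have hε2 : (0:ℝ) < 1 - 2 * ε := by linarith
  have hκ0 : (0:ℝ) < κ := by rw [hκ]; positivity
  have hm0 : (0:ℝ) < m := by exact_mod_cast hm
  have hκεm : (0:ℝ) < κ * ε * m := by positivity
  have hmpR : (m:ℝ) < p := by rw [hp]; nlinarith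
  have hpqR : (p:ℝ) < q := by rw [hp, hq]; nlinarith
  have hqrR : (q:ℝ) < r := by rw [hq, hr]; nlinarith
  have hmp : m < p := by exact_mod_cast hmpR
  have hpq : p < q := by exact_mod_cast hpqR
  have hqr : q < r := by exact_mod_cast hqrR
  have hr0 : (0:ℝ) < r := by rw [hr]; nlinarith
  have hpn : p < n := by omega
  have hqn : q < n := by omega
  have hmn : m < n := by omega
  -- d = p - m = q - p
  have hsumR : (p:ℝ) + p = q + m := by rw [hp, hq]; ring
  have hsum : p + p = q + m := by exact_mod_cast hsumR
  set d := p - m with hd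
  have hdq : p + d = q := by omega
  constructor
  · intro i j hij
    rw [hD₁ i, hD₁ j]
    by_cases hj : j.1 < r
    · rw [if_pos hj, if_pos (lt_of_le_of_lt (Fin.le_def.mp hij) hj)]
    · rw [if_neg hj]
      split
      · positivity
      · exact le_refl 0
  · intro P hP hPmono
    obtain ⟨hP0, _⟩ := hP
    set a1 : Fin n := ⟨m, hmn⟩
    set a2 : Fin n := ⟨p, hpn⟩
    set a3 : Fin n := ⟨q, hqn⟩
    set S1 := Finset.Ico a1 a2 with hS1
    set S2 := Finset.Ico a2 a3 with hS2
    have hmemS1 : ∀ i : Fin n, i ∈ S1 ↔ m ≤ i.1 ∧ i.1 < p := by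
      intro i; rw [hS1, Finset.mem_Ico]; exact Iff.rfl
    have hmemS2 : ∀ i : Fin n, i ∈ S2 ↔ p ≤ i.1 ∧ i.1 < q := by
      intro i; rw [hS2, Finset.mem_Ico]; exact Iff.rfl
    have hdisj : Disjoint S1 S2 := Finset.Ico_disjoint_Ico_consecutive a1 a2 a3
    -- D₂ on S1 is 0
    have hD2S1 : ∀ i ∈ S1, D₂ i = 0 := by
      intro i hi
      rw [hmemS1] at hi
      rw [hD₂ i, if_neg (by omega), if_pos hi.2]
    -- D₂ on S2
    have hD2S2 : ∀ i ∈ S2, D₂ i = 2 * ε / ((q:ℝ) - p) := by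
      intro i hi
      rw [hmemS2] at hi
      rw [hD₂ i, if_neg (by omega), if_neg (by omega), if_pos hi.2]
    -- total D₂ mass on S2
    have hcardS2 : S2.card = q - p := by rw [hS2, Fin.card_Ico]
    have hqpR : ((q:ℝ) - p) = ((q - p : ℕ) : ℝ) := by
      rw [Nat.cast_sub hpq.le]
    have hmassS2 : ∑ i ∈ S2, D₂ i = 2 * ε := by
      rw [Finset.sum_congr rfl hD2S2, Finset.sum_const, hcardS2, nsmul_eq_mul,
        ← hqpR]
      rw [mul_comm]
      exact div_mul_cancel₀ _ (sub_ne_zero.mpr (ne_of_gt hpqR))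
    -- P mass on S2 ≤ P mass on S1
    have hn0 : 0 < n := by omega
    have hPmass : ∑ i ∈ S2, P i ≤ ∑ i ∈ S1, P i := by
      have key : ∑ i ∈ S2, P i = ∑ i ∈ S1, P ⟨(i.1 + d) % n, Nat.mod_lt _ hn0⟩ := by
        refine Finset.sum_nbij' (fun i => (⟨i.1 - d, lt_of_le_of_lt (Nat.sub_le _ _) i.2⟩ : Fin n))
          (fun i => (⟨(i.1 + d) % n, Nat.mod_lt _ hn0⟩ : Fin n)) ?_ ?_ ?_ ?_ ?_
        · intro i hi; rw [hmemS2] at hi; rw [hmemS1]; simp only; omega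
        · intro i hi; rw [hmemS1] at hi; rw [hmemS2]
          simp only [Nat.mod_eq_of_lt (by omega : i.1 + d < n)]; omega
        · intro i hi; rw [hmemS2] at hi
          ext; simp only [Nat.mod_eq_of_lt (by omega : i.1 - d + d < n)]; omega
        · intro i hi; rw [hmemS1] at hi
          ext; simp only [Nat.mod_eq_of_lt (by omega : i.1 + d < n)]; omega
        · intro i hi; rw [hmemS2] at hi
          congr 1; ext
          simp only [Nat.mod_eq_of_lt (by omega : i.1 - d + d < n)]; omega
      rw [key]
      refine Finset.sum_le_sum fun i hi => hPmono ?_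
      rw [hmemS1] at hi
      rw [Fin.le_def]
      simp only [Nat.mod_eq_of_lt (by omega : i.1 + d < n)]
      omega
    -- lower bound on total variation sum
    have habs : 2 * ε ≤ ∑ i, |D₂ i - P i| := by
      have h1 : ∑ i ∈ S1 ∪ S2, |D₂ i - P i| ≤ ∑ i, |D₂ i - P i| :=
        Finset.sum_le_sum_of_subset_of_nonneg (Finset.subset_univ _)
          (fun i _ _ => abs_nonneg _)
      rw [Finset.sum_union hdisj] at h1
      have h2 : ∑ i ∈ S1, |D₂ i - P i| = ∑ i ∈ S1, P i := by
        refine Finset.sum_congr rfl fun i hi => ?_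
        rw [hD2S1 i hi, zero_sub, abs_neg, abs_of_nonneg (hP0 i)]
      have h3 : ∑ i ∈ S2, (D₂ i - P i) ≤ ∑ i ∈ S2, |D₂ i - P i| :=
        Finset.sum_le_sum fun i _ => le_abs_self _
      rw [Finset.sum_sub_distrib, hmassS2] at h3
      calc 2 * ε = (2 * ε - ∑ i ∈ S2, P i) + ∑ i ∈ S2, P i := by ring
        _ ≤ (∑ i ∈ S2, |D₂ i - P i|) + ∑ i ∈ S1, P i := by
            exact add_le_add h3 hPmass
        _ = ∑ i ∈ S1, P i + ∑ i ∈ S2, |D₂ i - P i| := by ring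
        _ = ∑ i ∈ S1, |D₂ i - P i| + ∑ i ∈ S2, |D₂ i - P i| := by rw [h2]
        _ ≤ ∑ i, |D₂ i - P i| := h1
    rw [tv]
    linarith
end
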